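/- arXiv:2401.08137 — 3 statements merged into one kernel-verified Lean document; each statement's English description precedes it below -/
import Mathlib

section
/- For each odd integer h with 1 ≤ h ≤ ñ−2, the sets ∂m_h and N_h coincide locally: for every x ∈ N_h there exists δ_x > 0 such that every x̃ ∈ ∂m_h with |x̃ − x| < δ_x belongs to N_h (equivalently, satisfies σ_m(x̃) = h). -/
open Filter Topology Set Matrix

/-- The cyclic signs: `δ₁ = −1` (index `1` corresponds to `0 : Fin n`) and `δᵢ = 1`
for `2 ≤ i ≤ n`, read cyclically. -/
def cycDelta (n : ℕ) [NeZero n] (i : Fin n) : ℝ := if i = 0 then -1 else 1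

/-- The open dense set `Λ = {x : xᵢ = 0 → δᵢ δ_{i+1} x_{i+1} x_{i−1} < 0}`. -/
def cycLambda (n : ℕ) [NeZero n] : Set (Fin n → ℝ) :=
  {x | ∀ i : Fin n, x i = 0 →
    cycDelta n i * cycDelta n (i + 1) * (x (i + 1) * x (i - 1)) < 0}

/-- The integer-valued Lyapunov function `σ`.  On `𝒪` it equals
`card {i : δᵢ xᵢ x_{i−1} ≤ 0}` and this formula is its unique continuous
extension to `Λ`. -/
noncomputable def cycSigma (n : ℕ) [NeZero n] (x : Fin n → ℝ) : ℕ :=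
  {i : Fin n | x i ≠ 0 ∧ x (i - 1) ≠ 0 ∧ cycDelta n i * (x i * x (i - 1)) < 0}.ncard
    + {i : Fin n | x i = 0}.ncard

/-- `ñ = n` for odd `n`, `ñ = n − 1` for even `n`. -/
def ntilde (n : ℕ) : ℕ := if Odd n then n else n - 1

/-- Condition (L) on a matrix (indices read cyclically in `Fin n`, so that
`a_{1,0} := a_{1,n}` and `a_{n,n+1} := a_{n,1}`): zero away from the cyclic
tridiagonal band, `a_{1,n} ≤ 0`, `a_{n,1} ≤ 0`, nonnegative sub- and super-diagonals,
and `∏ a_{i,i−1} + ∏ a_{i,i+1} < 0`. -/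
def CondL (n : ℕ) [NeZero n] (A : Matrix (Fin n) (Fin n) ℝ) : Prop :=
  (∀ i j : Fin n, j ≠ i - 1 → j ≠ i → j ≠ i + 1 → A i j = 0) ∧
  A 0 (0 - 1) ≤ 0 ∧
  A (0 - 1) 0 ≤ 0 ∧
  (∀ i : Fin n, i ≠ 0 → 0 ≤ A i (i - 1)) ∧
  (∀ i : Fin n, i ≠ 0 - 1 → 0 ≤ A i (i + 1)) ∧
  (∏ i : Fin n, A i (i - 1)) + (∏ i : Fin n, A i (i + 1)) < 0


/-- The values of `σ` attained on `𝒰 ∩ Λ` for every neighborhood `𝒰` of `x`. -/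
def sigmaCluster (n : ℕ) [NeZero n] (x : Fin n → ℝ) : Set ℕ :=
  {k | ∀ U ∈ nhds x, ∃ y ∈ U ∩ cycLambda n, cycSigma n y = k}

/-- `σ_m(x)`: the minimum of `σ` over `𝒰 ∩ Λ` for all sufficiently small
neighborhoods `𝒰` of `x`. -/
noncomputable def sigmaMin (n : ℕ) [NeZero n] (x : Fin n → ℝ) : ℕ :=
  sInf (sigmaCluster n x)

/-- `σ_M(x)`: the maximum of `σ` over `𝒰 ∩ Λ` for all sufficiently small
neighborhoods `𝒰` of `x`. -/
noncomputable def sigmaMax (n : ℕ) [NeZero n] (x : Fin n → ℝ) : ℕ :=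
  sSup (sigmaCluster n x)

/-- `m_h = {x ∈ ℝⁿ∖{0} : σ_m(x) = h}`. -/
def mSet (n : ℕ) [NeZero n] (h : ℕ) : Set (Fin n → ℝ) :=
  {x | x ≠ 0 ∧ sigmaMin n x = h}

/-- `N_h = ∂m_h ∩ m_h`. -/
def NSet (n : ℕ) [NeZero n] (h : ℕ) : Set (Fin n → ℝ) :=
  frontier (mSet n h) ∩ mSet n h

lemma cycSigma_le (n : ℕ) [NeZero n] (y : Fin n → ℝ) : cycSigma n y ≤ 2 * n := by
  have h1 : ∀ s : Set (Fin n), s.ncard ≤ n := by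
    intro s
    calc s.ncard ≤ (Set.univ : Set (Fin n)).ncard :=
          Set.ncard_le_ncard (Set.subset_univ _) Set.finite_univ
      _ = n := by simp [Set.ncard_univ]
  have := h1 {i : Fin n | y i ≠ 0 ∧ y (i - 1) ≠ 0 ∧ cycDelta n i * (y i * y (i - 1)) < 0}
  have := h1 {i : Fin n | y i = 0}
  unfold cycSigma
  omega

lemma exists_lambda_close (n : ℕ) [NeZero n] (x : Fin n → ℝ) {ε : ℝ} (hε : 0 < ε) :
    ∃ y ∈ cycLambda n, dist y x < ε := by
  refine ⟨fun i => if x i = 0 then ε / 2 else x i, ?_, ?_⟩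
  · intro i hi
    exfalso
    by_cases h : x i = 0
    · simp only [h, if_true] at hi; linarith
    · simp only [if_neg h] at hi; exact h hi
  · rw [dist_pi_lt_iff hε]
    intro i
    by_cases h : x i = 0
    · simp only [h, if_true, Real.dist_eq, sub_zero]
      rw [abs_of_pos (by linarith)]; linarith
    · simp [h, hε]

lemma exists_lambda_mem (n : ℕ) [NeZero n] (x : Fin n → ℝ) (U : Set (Fin n → ℝ))
    (hU : U ∈ nhds x) : ∃ y ∈ U ∩ cycLambda n, True := by
  obtain ⟨ε, hε, hball⟩ := Metric.mem_nhds_iff.1 hU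
  obtain ⟨y, hy, hyd⟩ := exists_lambda_close n x hε
  exact ⟨y, ⟨hball (Metric.mem_ball.2 hyd), hy⟩, trivial⟩

lemma sigmaCluster_nonempty (n : ℕ) [NeZero n] (x : Fin n → ℝ) :
    (sigmaCluster n x).Nonempty := by
  by_contra hc
  rw [Set.not_nonempty_iff_eq_empty] at hc
  have hch : ∀ k : ℕ, ∃ U ∈ nhds x, ∀ y ∈ U ∩ cycLambda n, cycSigma n y ≠ k := by
    intro k
    have hk : k ∉ sigmaCluster n x := by simp [hc]
    simp only [sigmaCluster, Set.mem_setOf_eq, not_forall] at hk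
    obtain ⟨U, hU, h2⟩ := hk
    push_neg at h2
    exact ⟨U, hU, h2⟩
  choose U hU hU2 using hch
  have hVn : (⋂ k ∈ Finset.range (2 * n + 1), U k) ∈ nhds x :=
    (Filter.biInter_finset_mem _).2 fun k _ => hU k
  obtain ⟨y, ⟨hyV, hyL⟩, -⟩ := exists_lambda_mem n x _ hVn
  have hle := cycSigma_le n y
  have hyU : y ∈ U (cycSigma n y) :=
    Set.mem_iInter₂.1 hyV _ (Finset.mem_range.2 (by omega))
  exact hU2 (cycSigma n y) y ⟨hyU, hyL⟩ rfl

lemma exists_good_nbhd (n : ℕ) [NeZero n] (x : Fin n → ℝ) :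
    ∃ U : Set (Fin n → ℝ), IsOpen U ∧ x ∈ U ∧
      ∀ y ∈ U, sigmaCluster n y ⊆ sigmaCluster n x := by
  have hch : ∀ k : ℕ, ∃ U ∈ nhds x,
      ∀ y ∈ U ∩ cycLambda n, cycSigma n y = k → k ∈ sigmaCluster n x := by
    intro k
    by_cases hk : k ∈ sigmaCluster n x
    · exact ⟨Set.univ, Filter.univ_mem, fun _ _ _ => hk⟩
    · simp only [sigmaCluster, Set.mem_setOf_eq, not_forall] at hk
      obtain ⟨U, hU, h2⟩ := hk
      push_neg at h2
      exact ⟨U, hU, fun y hy hk' => absurd hk' (h2 y hy)⟩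
  choose U hU hU2 using hch
  have hVn : (⋂ k ∈ Finset.range (2 * n + 1), U k) ∈ nhds x :=
    (Filter.biInter_finset_mem _).2 fun k _ => hU k
  obtain ⟨W, hWV, hWo, hWx⟩ := mem_nhds_iff.1 hVn
  refine ⟨W, hWo, hWx, fun y hy k hk => ?_⟩
  obtain ⟨z, hz, hzk⟩ := hk W (hWo.mem_nhds hy)
  have hk2n : k ≤ 2 * n := hzk ▸ cycSigma_le n z
  have hzU : z ∈ U k :=
    Set.mem_iInter₂.1 (hWV hz.1) k (Finset.mem_range.2 (by omega))
  exact hU2 k z ⟨hzU, hz.2⟩ hzk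

lemma mem_cluster_of_closure (n : ℕ) [NeZero n] (h : ℕ) (x : Fin n → ℝ)
    (hx : x ∈ closure (mSet n h)) : h ∈ sigmaCluster n x := by
  intro V hV
  obtain ⟨W, hWV, hWo, hWx⟩ := mem_nhds_iff.1 hV
  obtain ⟨z, hzW, hzm⟩ := (_root_.mem_closure_iff).1 hx W hWo hWx
  have hmem : h ∈ sigmaCluster n z := by
    have := Nat.sInf_mem (sigmaCluster_nonempty n z)
    rwa [show sInf (sigmaCluster n z) = h from hzm.2] at this
  obtain ⟨y, hy, hyh⟩ := hmem W (hWo.mem_nhds hzW)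
  exact ⟨y, ⟨hWV hy.1, hy.2⟩, hyh⟩

/-- For each odd `h` with `1 ≤ h ≤ ñ − 2`, `∂m_h` and `N_h`
coincide locally: for every `x ∈ N_h` there is `δ_x > 0` such that every
`x̃ ∈ ∂m_h` with `|x̃ − x| < δ_x` belongs to `N_h`. -/
theorem frontier_mSet_locally_eq_NSet
    {n : ℕ} [NeZero n] (hn : 3 ≤ n)
    (h : ℕ) (hodd : Odd h) (h1 : 1 ≤ h) (h2 : h ≤ ntilde n - 2) :
    ∀ x ∈ NSet n h, ∃ δ : ℝ, 0 < δ ∧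
      ∀ x' ∈ frontier (mSet n h), dist x' x < δ → x' ∈ NSet n h := by
  intro x hx
  have hxne : x ≠ 0 := hx.2.1
  have hxm : sigmaMin n x = h := hx.2.2
  obtain ⟨U, hUo, hUx, hUsub⟩ := exists_good_nbhd n x
  obtain ⟨ε, hε, hball⟩ := Metric.isOpen_iff.1 hUo x hUx
  refine ⟨min ε (dist x 0), lt_min hε (dist_pos.2 hxne), fun x' hx'f hx'd => ?_⟩
  have hx'U : x' ∈ U :=
    hball (Metric.mem_ball.2 (lt_of_lt_of_le hx'd (min_le_left _ _)))
  have hx'ne : x' ≠ 0 := by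
    intro h0
    rw [h0] at hx'd
    have := lt_of_lt_of_le hx'd (min_le_right _ _)
    rw [dist_comm] at this
    exact lt_irrefl _ this
  have hsub := hUsub x' hx'U
  have hlow : h ≤ sigmaMin n x' := by
    have hm : sInf (sigmaCluster n x') ∈ sigmaCluster n x :=
      hsub (Nat.sInf_mem (sigmaCluster_nonempty n x'))
    have := Nat.sInf_le hm
    rwa [show sInf (sigmaCluster n x) = h from hxm] at this
  have hup : sigmaMin n x' ≤ h :=
    Nat.sInf_le (mem_cluster_of_closure n h x' (frontier_subset_closure (s := mSet n h) hx'f))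
  exact ⟨hx'f, hx'ne, le_antisymm hup hlow⟩
end

section
/- Let ℳ and 𝒩 be two infinite subsets of ℕ. Then there exist natural numbers m₁, m₂, m₃ ∈ ℳ, n₁, n₂, n₃ ∈ 𝒩, and k₁, k₂, l₁, l₂ ∈ ℕ such that n₃ > k₁m₁ + k₂m₂ + m₁ and m₃ = l₁n₁ + l₂n₂ + n₃ − (k₁m₁ + k₂m₂). -/
/-- Pigeonhole: an infinite set of naturals has an infinite residue class mod `d > 0`. -/
lemma exists_infinite_residue (S : Set ℕ) (hS : S.Infinite) (d : ℕ) (hd : 0 < d) :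
    ∃ r, {x ∈ S | x % d = r}.Infinite := by
  by_contra h
  push_neg at h
  have hsub : S ⊆ ⋃ r ∈ Finset.range d, {x ∈ S | x % d = r} := by
    intro x hx
    exact Set.mem_biUnion (Finset.mem_range.mpr (Nat.mod_lt _ hd)) ⟨hx, rfl⟩
  exact hS ((Set.Finite.biUnion (Finset.range d).finite_toSet
    (fun r _ => (h r))).subset hsub)

/-- If `ℳ` and `𝒩` are two infinite subsets of `ℕ`, then
there are `m₁, m₂, m₃ ∈ ℳ`, `n₁, n₂, n₃ ∈ 𝒩` and `k₁, k₂, l₁, l₂ ∈ ℕ` with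
`n₃ > k₁m₁ + k₂m₂ + m₁` and `m₃ = l₁n₁ + l₂n₂ + n₃ − (k₁m₁ + k₂m₂)`. -/
theorem infinite_subsets_combination
    (M N : Set ℕ) (hM : M.Infinite) (hN : N.Infinite) :
    ∃ m₁ ∈ M, ∃ m₂ ∈ M, ∃ m₃ ∈ M, ∃ n₁ ∈ N, ∃ n₂ ∈ N, ∃ n₃ ∈ N,
      ∃ k₁ k₂ l₁ l₂ : ℕ,
        k₁ * m₁ + k₂ * m₂ + m₁ < n₃ ∧
        (m₃ : ℤ) = l₁ * n₁ + l₂ * n₂ + n₃ - (k₁ * m₁ + k₂ * m₂) := by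
  -- pick m₁ ∈ M with m₁ ≥ 1
  obtain ⟨m₁, hm₁M, hm₁pos⟩ := hM.exists_gt 0
  set p := m₁ - 1 with hp
  have hm : m₁ = p + 1 := by omega
  -- infinite residue classes mod m₁
  obtain ⟨rM, hrM⟩ := exists_infinite_residue M hM m₁ hm₁pos
  obtain ⟨rN, hrN⟩ := exists_infinite_residue N hN m₁ hm₁pos
  -- pick n₁ in the infinite class of N
  obtain ⟨n₁, hn₁N, hn₁r⟩ := hrN.nonempty
  -- pick m₂, then a large m₃, in the infinite class of M
  obtain ⟨m₂, hm₂M, hm₂r⟩ := hrM.nonempty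
  obtain ⟨m₃, hm₃mem, hm₃big⟩ := hrM.exists_gt (p * n₁ + m₁)
  obtain ⟨hm₃M, hm₃r⟩ := hm₃mem
  -- pick a large n₃ in the infinite class of N
  obtain ⟨n₃, hn₃mem, hn₃big⟩ := hrN.exists_gt (m₃ + p * m₂)
  obtain ⟨hn₃N, hn₃r⟩ := hn₃mem
  -- divisibility facts
  have h1 : n₃ ≡ n₁ [MOD m₁] := by
    show n₃ % m₁ = n₁ % m₁
    rw [hn₃r, hn₁r]
  have h2 : m₃ ≡ m₂ [MOD m₁] := by
    show m₃ % m₁ = m₂ % m₁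
    rw [hm₃r, hm₂r]
  have hd1 : m₁ ∣ p * n₁ + n₃ := by
    have e1 : (p * n₁ + n₃) ≡ (p * n₁ + n₁) [MOD m₁] := Nat.ModEq.add_left _ h1
    have e2 : p * n₁ + n₁ = m₁ * n₁ := by rw [hm]; ring
    have e3 : (p * n₁ + n₃) ≡ 0 [MOD m₁] := by
      refine e1.trans ?_
      rw [e2]
      exact (Nat.modEq_zero_iff_dvd).mpr ⟨n₁, rfl⟩
    exact (Nat.modEq_zero_iff_dvd).mp e3
  have hd2 : m₁ ∣ m₃ + p * m₂ := by
    have e1 : (m₃ + p * m₂) ≡ (m₂ + p * m₂) [MOD m₁] := Nat.ModEq.add_right _ h2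
    have e2 : m₂ + p * m₂ = m₁ * m₂ := by rw [hm]; ring
    have e3 : (m₃ + p * m₂) ≡ 0 [MOD m₁] := by
      refine e1.trans ?_
      rw [e2]
      exact (Nat.modEq_zero_iff_dvd).mpr ⟨m₂, rfl⟩
    exact (Nat.modEq_zero_iff_dvd).mp e3
  have hle : m₃ + p * m₂ ≤ p * n₁ + n₃ := by omega
  obtain ⟨x, hx⟩ := Nat.dvd_sub hd1 hd2
  have key : p * n₁ + n₃ = m₃ + p * m₂ + m₁ * x := by omega
  refine ⟨m₁, hm₁M, m₂, hm₂M, m₃, hm₃M, n₁, hn₁N, n₁, hn₁N, n₃, hn₃N,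
    x, p, p, 0, ?_, ?_⟩
  · -- x * m₁ + p * m₂ + m₁ < n₃
    have : m₁ * x = x * m₁ := Nat.mul_comm _ _
    omega
  · have keyz : (p : ℤ) * n₁ + n₃ = m₃ + p * m₂ + m₁ * x := by exact_mod_cast key
    push_cast
    linarith
end

section
/- Assume Ω = ℝⁿ and that f satisfies the dissipativity condition (H): there exists C > 0 such that for every t ∈ ℝ, every x ∈ ℝⁿ and every i ∈ {1,…,n}, if |xᵢ| ≥ C, |x_{i−1}| ≤ |xᵢ| and |x_{i+1}| ≤ |xᵢ| (indices mod n), then fᵢ(t,x)·xᵢ < 0. Then for every x ∈ ℝⁿ the solution φ(t,x) is defined for all t ≥ 0, and there exists t* ≥ 0 such that φ(t,x) ∈ A := {z ∈ ℝⁿ : |zᵢ| ≤ C for all i} for all t ≥ t*; in particular every forward orbit is bounded. -/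
open Filter Topology Set Matrix

/-- The partial derivative `∂fᵢ/∂xⱼ (t, x)`. -/
noncomputable def pder (n : ℕ) (f : ℝ → (Fin n → ℝ) → Fin n → ℝ)
    (t : ℝ) (x : Fin n → ℝ) (i j : Fin n) : ℝ :=
  fderiv ℝ (fun y => f t y i) x (Pi.single j 1)

/-- The time `T`-periodic negative cyclic feedback system `ẋ = f(t,x)` on the
open convex set `Ω`: `f` is `C¹` on `ℝ × Ω`, `T`-periodic in `t`, each `fᵢ`
depends only on `x_{i−1}, xᵢ, x_{i+1}` (cyclically), and (with index `1`
corresponding to `0 : Fin n`): `∂f₁/∂xₙ < 0`, `∂fₙ/∂x₁ ≤ 0`,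
`∂fᵢ/∂x_{i−1} > 0` for `2 ≤ i ≤ n`, `∂fᵢ/∂x_{i+1} ≥ 0` for `1 ≤ i ≤ n−1`. -/
def NegCyclicFeedback (n : ℕ) [NeZero n] (T : ℝ) (Ω : Set (Fin n → ℝ))
    (f : ℝ → (Fin n → ℝ) → Fin n → ℝ) : Prop :=
  0 < T ∧ IsOpen Ω ∧ Convex ℝ Ω ∧
  ContDiffOn ℝ 1 (fun p : ℝ × (Fin n → ℝ) => f p.1 p.2) (Set.univ ×ˢ Ω) ∧
  (∀ t x, f (t + T) x = f t x) ∧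
  ∀ t : ℝ, ∀ x ∈ Ω,
    (∀ i j : Fin n, j ≠ i - 1 → j ≠ i → j ≠ i + 1 → pder n f t x i j = 0) ∧
    pder n f t x 0 (0 - 1) < 0 ∧
    pder n f t x (0 - 1) 0 ≤ 0 ∧
    (∀ i : Fin n, i ≠ 0 → 0 < pder n f t x i (i - 1)) ∧
    (∀ i : Fin n, i ≠ 0 - 1 → 0 ≤ pder n f t x i (i + 1))

/-- `u` is a solution of `ẋ = f(t,x)` in `Ω`, defined for all `t ∈ ℝ`. -/
def IsFullSolution {n : ℕ} (f : ℝ → (Fin n → ℝ) → Fin n → ℝ)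
    (Ω : Set (Fin n → ℝ)) (u : ℝ → Fin n → ℝ) : Prop :=
  ∀ t : ℝ, u t ∈ Ω ∧ HasDerivAt u (f t (u t)) t

/-- `u` is a solution of `ẋ = f(t,x)` in `Ω`, defined for all `t ≥ 0`. -/
def IsFwdSolution {n : ℕ} (f : ℝ → (Fin n → ℝ) → Fin n → ℝ)
    (Ω : Set (Fin n → ℝ)) (u : ℝ → Fin n → ℝ) : Prop :=
  ∀ t : ℝ, 0 ≤ t → u t ∈ Ω ∧ HasDerivAt u (f t (u t)) t

/-- The ω-limit set of the (forward) Poincaré orbit `{P^k z = φ(kT, z)}` of `z`. -/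
def omegaP {n : ℕ} (T : ℝ) (φ : ℝ → (Fin n → ℝ) → Fin n → ℝ) (z : Fin n → ℝ) :
    Set (Fin n → ℝ) :=
  {w | ∃ nk : ℕ → ℕ, Filter.Tendsto nk Filter.atTop Filter.atTop ∧
        Filter.Tendsto (fun k => φ ((nk k : ℝ) * T) z) Filter.atTop (nhds w)}

/-- The α-limit set of the backward Poincaré orbit `{P^{-k} z = φ(−kT, z)}` of `z`. -/
def alphaP {n : ℕ} (T : ℝ) (φ : ℝ → (Fin n → ℝ) → Fin n → ℝ) (z : Fin n → ℝ) :
    Set (Fin n → ℝ) :=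
  {w | ∃ nk : ℕ → ℕ, Filter.Tendsto nk Filter.atTop Filter.atTop ∧
        Filter.Tendsto (fun k => φ (-((nk k : ℝ) * T)) z) Filter.atTop (nhds w)}

/-- Projection `h(x) = (x₁, x₂)` onto the plane. -/
def projH (n : ℕ) [NeZero n] (z : Fin n → ℝ) : ℝ × ℝ := (z 0, z 1)

section AuxProof

lemma exists_norm_coord {n : ℕ} [NeZero n] (z : Fin n → ℝ) :
    ∃ i : Fin n, |z i| = ‖z‖ := by
  obtain ⟨i, -, hi⟩ := Finset.exists_mem_eq_sup (Finset.univ : Finset (Fin n))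
    Finset.univ_nonempty (fun i => ‖z i‖₊)
  exact ⟨i, by rw [Pi.norm_def, hi, coe_nnnorm, Real.norm_eq_abs]⟩

lemma sq_coord_le {n : ℕ} (z : Fin n → ℝ) (i : Fin n) : (z i)^2 ≤ ‖z‖^2 := by
  have h1 : |z i| ≤ ‖z‖ := by rw [← Real.norm_eq_abs]; exact norm_le_pi_norm z i
  nlinarith [abs_nonneg (z i), sq_abs (z i)]

lemma core {n : ℕ} [NeZero n] (f : ℝ → (Fin n → ℝ) → Fin n → ℝ)
    (u : ℝ → Fin n → ℝ) (a b : ℝ)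
    (hcont : ContinuousOn u (Icc a b))
    (hderiv : ∀ t ∈ Ico a b, HasDerivWithinAt u (f t (u t)) (Ici t) t)
    (B B' : ℝ → ℝ) (hB : ∀ s, HasDerivAt B (B' s) s)
    (hinit : ‖u a‖^2 ≤ B a)
    (hbound : ∀ t ∈ Ico a b, ‖u t‖^2 = B t →
      ∀ i : Fin n, (u t i)^2 = ‖u t‖^2 → 2 * (f t (u t) i * u t i) < B' t) :
    ∀ t ∈ Icc a b, ‖u t‖^2 ≤ B t := by
  set g : ℝ → ℝ := fun t => ‖u t‖^2 with hg
  have hArg : ∀ t, ∃ i, (u t i)^2 = g t := fun t => by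
    obtain ⟨i, hi⟩ := exists_norm_coord (u t)
    exact ⟨i, by rw [hg]; simp only; rw [← hi, sq_abs]⟩
  have hsne : ∀ t, (Finset.univ.filter (fun i => (u t i)^2 = g t)).Nonempty := by
    intro t
    obtain ⟨i, hi⟩ := hArg t
    exact ⟨i, Finset.mem_filter.2 ⟨Finset.mem_univ _, hi⟩⟩
  set φ : ℝ → ℝ := fun t => (Finset.univ.filter (fun i => (u t i)^2 = g t)).sup'
      (hsne t) (fun i => 2 * (f t (u t) i * u t i)) with hφ
  have hgc : ContinuousOn g (Icc a b) := (hcont.norm).pow 2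
  intro t ht
  refine image_le_of_liminf_slope_right_lt_deriv_boundary (f := g) (f' := φ)
      (B := B) (B' := B') hgc ?_ hinit hB ?_ ht
  · -- liminf slope condition
    intro s hs r hr
    have hle : 𝓝[>] s ≤ 𝓝[Icc a b] s := nhdsWithin_le_of_mem (Icc_mem_nhdsGT_of_mem hs)
    have hu := hderiv s hs
    -- eventually, for every i in the argmax set, slope of (u · i)^2 is < r
    have ev1 : ∀ᶠ z in 𝓝[>] s, ∀ i : Fin n,
        i ∈ Finset.univ.filter (fun i => (u s i)^2 = g s) →
        slope (fun z => (u z i)^2) s z < r := by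
      rw [eventually_all]
      intro i
      by_cases hi : i ∈ Finset.univ.filter (fun i => (u s i)^2 = g s)
      · have hco : HasDerivWithinAt (fun z => u z i) (f s (u s) i) (Ici s) s :=
          hasDerivWithinAt_pi.1 hu i
        have hsq : HasDerivWithinAt (fun z => (u z i)^2)
            (2 * (f s (u s) i * u s i)) (Ici s) s := by
          exact (hco.fun_pow 2).congr_deriv (by rw [show (2:ℕ) - 1 = 1 from rfl, pow_one]; push_cast; ring)
        have hts : Tendsto (slope (fun z => (u z i)^2) s) (𝓝[>] s)
            (𝓝 (2 * (f s (u s) i * u s i))) := by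
          have := hasDerivWithinAt_iff_tendsto_slope.1 hsq
          rwa [Ici_sdiff_left] at this
        have hlt : 2 * (f s (u s) i * u s i) < r :=
          lt_of_le_of_lt (Finset.le_sup' (fun i => 2 * (f s (u s) i * u s i)) hi) hr
        exact (hts.eventually_lt_const hlt).mono fun z hz _ => hz
      · exact Eventually.of_forall fun z h' => absurd h' hi
    have ev2 : ∀ᶠ z in 𝓝[>] s, ∀ j : Fin n,
        j ∉ Finset.univ.filter (fun i => (u s i)^2 = g s) → (u z j)^2 < g z := by
      rw [eventually_all]
      intro j
      by_cases hj : j ∈ Finset.univ.filter (fun i => (u s i)^2 = g s)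
      · exact Eventually.of_forall fun z h' => absurd hj h'
      · have hlt : (u s j)^2 < g s := by
          rcases lt_or_eq_of_le (sq_coord_le (u s) j) with h | h
          · exact h
          · exact absurd (Finset.mem_filter.2 ⟨Finset.mem_univ j, h⟩) hj
        have hc : ContinuousWithinAt (fun z => g z - (u z j)^2) (Icc a b) s :=
          ((hgc.sub (((continuous_apply j).comp_continuousOn hcont).pow 2)) s
            (Ico_subset_Icc_self hs))
        have hev : ∀ᶠ z in 𝓝[Icc a b] s, 0 < g z - (u z j)^2 :=
          hc.eventually_const_lt (by simpa using sub_pos.2 hlt)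
        exact ((hev.filter_mono hle)).mono fun z hz _ => by linarith
    refine ((ev1.and ev2).mono ?_).frequently
    rintro z ⟨h1, h2⟩
    obtain ⟨i, hi⟩ := hArg z
    have himem : i ∈ Finset.univ.filter (fun i => (u s i)^2 = g s) := by
      by_contra hni
      exact absurd hi (ne_of_lt (h2 i hni))
    have hgs : g s = (u s i)^2 := ((Finset.mem_filter.1 himem).2).symm
    have : slope g s z = slope (fun z => (u z i)^2) s z := by
      rw [slope_def_field, slope_def_field, hi, hgs]
    rw [this]
    exact h1 i himem
  · -- bound
    intro s hs hgs
    exact (Finset.sup'_lt_iff (hsne s)).2 fun i hi =>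
      hbound s hs hgs i (Finset.mem_filter.1 hi).2
section
variable {n : ℕ} [NeZero n]

-- uniform Lipschitz & bound from periodicity and compactness
lemma uniform_lip_bound (T : ℝ) (hT : 0 < T) (f : ℝ → (Fin n → ℝ) → Fin n → ℝ)
    (hF : ContDiff ℝ 1 (fun p : ℝ × (Fin n → ℝ) => f p.1 p.2))
    (hper : ∀ t x, f (t + T) x = f t x) (r : ℝ) :
    ∃ (L : NNReal) (Cb : ℝ), 1 ≤ Cb ∧
      (∀ t : ℝ, LipschitzOnWith L (f t) (Metric.closedBall (0 : Fin n → ℝ) r)) ∧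
      (∀ t : ℝ, ∀ y ∈ Metric.closedBall (0 : Fin n → ℝ) r, ‖f t y‖ ≤ Cb) := by
  set F : ℝ × (Fin n → ℝ) → Fin n → ℝ := fun p => f p.1 p.2 with hFdef
  set S : Set (ℝ × (Fin n → ℝ)) := Icc (0:ℝ) T ×ˢ Metric.closedBall (0 : Fin n → ℝ) r with hS
  have hScomp : IsCompact S := isCompact_Icc.prod (isCompact_closedBall _ _)
  have hSconv : Convex ℝ S := (convex_Icc _ _).prod (convex_closedBall _ _)
  obtain ⟨Cb0, hCb0⟩ := hScomp.exists_bound_of_continuousOn hF.continuous.continuousOn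
  obtain ⟨M, hM⟩ := hScomp.exists_bound_of_continuousOn
    ((hF.continuous_fderiv one_ne_zero).continuousOn (s := S))
  have hM0 : (0:ℝ) ≤ max M 0 := le_max_right _ _
  set L : NNReal := ⟨max M 0, hM0⟩ with hL
  have hLip : LipschitzOnWith L F S := by
    apply Convex.lipschitzOnWith_of_nnnorm_fderiv_le (fun p _ => (hF.differentiable one_ne_zero p)) ?_ hSconv
    intro p hp
    rw [← NNReal.coe_le_coe]
    exact (hM p hp).trans (le_max_left _ _)
  have hperF : Function.Periodic (fun t => f t) T := fun t => funext fun y => hper t y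
  have hred : ∀ t : ℝ, ∃ s ∈ Ico (0:ℝ) T, f t = f s := fun t =>
    hperF.exists_mem_Ico₀ hT t
  refine ⟨L, max Cb0 1, le_max_right _ _, ?_, ?_⟩
  · intro t
    obtain ⟨s, hs, hts⟩ := hred t
    rw [hts]
    intro y hy y' hy'
    have := hLip (show ((s, y) : ℝ × (Fin n → ℝ)) ∈ S from ⟨Ico_subset_Icc_self hs, hy⟩)
      (show ((s, y') : ℝ × (Fin n → ℝ)) ∈ S from ⟨Ico_subset_Icc_self hs, hy'⟩)
    simpa [Prod.edist_eq] using this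
  · intro t y hy
    obtain ⟨s, hs, hts⟩ := hred t
    rw [hts]
    exact (hCb0 (s, y) ⟨Ico_subset_Icc_self hs, hy⟩).trans (le_max_left _ _)

end

section
variable {n : ℕ} [NeZero n]

lemma picard_step (f : ℝ → (Fin n → ℝ) → Fin n → ℝ)
    (hFc : Continuous (fun p : ℝ × (Fin n → ℝ) => f p.1 p.2))
    (C : ℝ) (hC : 0 < C)
    (hH : ∀ t : ℝ, ∀ x : Fin n → ℝ, ∀ i : Fin n,
      C ≤ |x i| → |x (i - 1)| ≤ |x i| → |x (i + 1)| ≤ |x i| →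
      f t x i * x i < 0)
    (R0 : ℝ) (hR0C : C ≤ R0) (L : NNReal) (Cb : ℝ) (hCb1 : 1 ≤ Cb)
    (hLip : ∀ t : ℝ, LipschitzOnWith L (f t) (Metric.closedBall (0 : Fin n → ℝ) (R0+1)))
    (hBnd : ∀ t : ℝ, ∀ y ∈ Metric.closedBall (0 : Fin n → ℝ) (R0+1), ‖f t y‖ ≤ Cb)
    (a : ℝ) (x₀ : Fin n → ℝ) (hx₀ : ‖x₀‖ ≤ R0) :
    ∃ sol : ℝ → Fin n → ℝ, sol a = x₀ ∧
      (∀ t ∈ Icc a (a + 1/Cb), HasDerivWithinAt sol (f t (sol t)) (Icc a (a + 1/Cb)) t) ∧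
      (∀ t ∈ Icc a (a + 1/Cb), ‖sol t‖ ≤ R0) := by
  have hCb0 : (0:ℝ) < Cb := lt_of_lt_of_le one_pos hCb1
  have hh0 : (0:ℝ) < 1/Cb := by positivity
  have hsub : Metric.closedBall x₀ 1 ⊆ Metric.closedBall (0 : Fin n → ℝ) (R0+1) := by
    apply Metric.closedBall_subset_closedBall'
    rw [dist_zero_right]
    linarith
  have hsub' : Metric.closedBall x₀ ((1:NNReal):ℝ) ⊆ Metric.closedBall (0 : Fin n → ℝ) (R0+1) := by
    simpa using hsub
  have hpl : IsPicardLindelof f (tmin := a) (tmax := a + 1/Cb) ⟨a, le_rfl, by linarith⟩ x₀ 1 0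
      ⟨Cb, hCb0.le⟩ L :=
    { lipschitzOnWith := fun t _ => (hLip t).mono hsub'
      continuousOn := fun y _ => (hFc.comp (continuous_id.prodMk continuous_const)).continuousOn
      norm_le := fun t _ y hy => hBnd t y (hsub' hy)
      mul_max_le := by
        simp only [NNReal.coe_mk, NNReal.coe_one, NNReal.coe_zero, sub_zero]
        show Cb * max (a + 1/Cb - a) (a - a) ≤ 1
        have : max (a + 1/Cb - a) (a - a) = 1/Cb := by
          rw [max_eq_left] <;> simp <;> linarith
        have h2 : Cb * (1/Cb) = 1 := mul_one_div_cancel hCb0.ne'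
        rw [this]
        linarith [h2] }
  obtain ⟨sol, hsol0, hsolD⟩ := hpl.exists_eq_forall_mem_Icc_hasDerivWithinAt₀
  replace hsol0 : sol a = x₀ := hsol0
  have hb : ∀ t ∈ Icc a (a + 1/Cb), ‖sol t‖^2 ≤ R0^2 := by
    apply core f sol a (a + 1/Cb)
      (fun t ht => (hsolD t ht).continuousWithinAt)
      (fun t ht => (hsolD t (Ico_subset_Icc_self ht)).mono_of_mem_nhdsWithin
        (Icc_mem_nhdsGE_of_mem ht))
      (fun _ => R0^2) (fun _ => 0) (fun s => hasDerivAt_const s _)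
      (by rw [hsol0]; exact pow_le_pow_left₀ (norm_nonneg _) hx₀ 2)
    intro t ht heq i hi
    have h1 : C ≤ |sol t i| := by
      nlinarith [sq_abs (sol t i), abs_nonneg (sol t i)]
    have h2 : |sol t (i-1)| ≤ |sol t i| := by
      nlinarith [sq_coord_le (sol t) (i-1), sq_abs (sol t (i-1)), sq_abs (sol t i),
        abs_nonneg (sol t (i-1)), abs_nonneg (sol t i)]
    have h3 : |sol t (i+1)| ≤ |sol t i| := by
      nlinarith [sq_coord_le (sol t) (i+1), sq_abs (sol t (i+1)), sq_abs (sol t i),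
        abs_nonneg (sol t (i+1)), abs_nonneg (sol t i)]
    have := hH t (sol t) i h1 h2 h3
    linarith
  refine ⟨sol, hsol0, hsolD, fun t ht => ?_⟩
  nlinarith [hb t ht, norm_nonneg (sol t)]

end

section
variable {n : ℕ} [NeZero n]

lemma global_exists (T : ℝ) (hT : 0 < T) (f : ℝ → (Fin n → ℝ) → Fin n → ℝ)
    (hF : ContDiff ℝ 1 (fun p : ℝ × (Fin n → ℝ) => f p.1 p.2))
    (hper : ∀ t x, f (t + T) x = f t x)
    (C : ℝ) (hC : 0 < C)
    (hH : ∀ t : ℝ, ∀ x : Fin n → ℝ, ∀ i : Fin n,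
      C ≤ |x i| → |x (i - 1)| ≤ |x i| → |x (i + 1)| ≤ |x i| →
      f t x i * x i < 0)
    (x : Fin n → ℝ) :
    ∃ u : ℝ → Fin n → ℝ, u 0 = x ∧
      ∀ t : ℝ, 0 ≤ t → HasDerivAt u (f t (u t)) t := by
  set R0 : ℝ := max ‖x‖ C with hR0
  have hR0C : C ≤ R0 := le_max_right _ _
  obtain ⟨L, Cb, hCb1, hLip, hBnd⟩ := uniform_lip_bound T hT f hF hper (R0 + 1)
  have hCb0 : (0:ℝ) < Cb := lt_of_lt_of_le one_pos hCb1
  set h : ℝ := 1/Cb with hhdef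
  have hh0 : (0:ℝ) < h := by positivity
  have step := picard_step f hF.continuous C hC hH R0 hR0C L Cb hCb1 hLip hBnd
  choose sol hs1 hs2 hs3 using step
  -- the sequence of endpoints
  set Snat : ℕ → {z : Fin n → ℝ // ‖z‖ ≤ R0} := fun k =>
    Nat.rec ⟨x, le_max_left _ _⟩
      (fun k ih => ⟨sol ((k:ℝ)*h) ih.1 ih.2 ((k:ℝ)*h + h),
        hs3 ((k:ℝ)*h) ih.1 ih.2 _ ⟨by nlinarith, le_rfl⟩⟩) k with hSnat
  set w : ℕ → ℝ → Fin n → ℝ := fun k => sol ((k:ℝ)*h) (Snat k).1 (Snat k).2 with hw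
  have hSrec : ∀ k : ℕ, (Snat (k+1)).1 = w k ((k:ℝ)*h + h) := fun k => rfl
  have hstart : ∀ k : ℕ, w k ((k:ℝ)*h) = (Snat k).1 := fun k => hs1 _ _ _
  have hderivw : ∀ k : ℕ, ∀ t ∈ Icc ((k:ℝ)*h) ((k:ℝ)*h + h),
      HasDerivWithinAt (w k) (f t (w k t)) (Icc ((k:ℝ)*h) ((k:ℝ)*h + h)) t :=
    fun k => hs2 _ _ _
  have hcast : ∀ k : ℕ, ((k+1 : ℕ):ℝ) * h = (k:ℝ)*h + h := by
    intro k; push_cast; ring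
  set u : ℝ → Fin n → ℝ := fun t =>
    if t < 0 then x + t • f 0 x else w ⌊t/h⌋₊ t with hu
  have hueq : ∀ k : ℕ, ∀ t ∈ Icc ((k:ℝ)*h) ((k:ℝ)*h + h), u t = w k t := by
    intro k t ht
    have hkh0 : (0:ℝ) ≤ (k:ℝ)*h := by positivity
    have ht0 : (0:ℝ) ≤ t := le_trans hkh0 ht.1
    have hun : u t = w ⌊t/h⌋₊ t := by rw [hu]; simp [not_lt.2 ht0]
    rcases lt_or_eq_of_le ht.2 with hlt | heq
    · have hfl : ⌊t/h⌋₊ = k := by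
        rw [Nat.floor_eq_iff (by positivity)]
        constructor
        · rw [le_div_iff₀ hh0]; exact ht.1
        · rw [div_lt_iff₀ hh0]; push_cast; linarith
      rw [hun, hfl]
    · have ht' : t = ((k+1 : ℕ):ℝ) * h := by rw [heq, hcast]
      have hfl : ⌊t/h⌋₊ = k + 1 := by
        rw [ht', mul_div_cancel_right₀ _ (ne_of_gt hh0)]
        exact Nat.floor_natCast _
      rw [hun, hfl, ht', hstart (k+1), hSrec k, hcast k]
  have hu0 : u 0 = x := by
    have hmem : (0:ℝ) ∈ Icc (((0:ℕ):ℝ)*h) (((0:ℕ):ℝ)*h + h) := by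
      simp only [Nat.cast_zero, zero_mul]
      exact ⟨le_rfl, by linarith⟩
    rw [hueq 0 0 hmem]
    have h0 := hstart 0
    simp only [Nat.cast_zero, zero_mul] at h0
    rw [h0]
    rfl
  refine ⟨u, hu0, ?_⟩
  intro t ht
  obtain ⟨k, hk⟩ : ∃ k : ℕ, k = ⌊t/h⌋₊ := ⟨_, rfl⟩
  have hk1 : (k:ℝ)*h ≤ t := by
    rw [← le_div_iff₀ hh0, hk]
    exact Nat.floor_le (by positivity)
  have hk2 : t < (k:ℝ)*h + h := by
    have h1 : t/h < (k:ℝ) + 1 := by rw [hk]; exact Nat.lt_floor_add_one (t/h)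
    have h2 : t < ((k:ℝ) + 1) * h := (div_lt_iff₀ hh0).1 h1
    nlinarith
  have hmem : t ∈ Icc ((k:ℝ)*h) ((k:ℝ)*h + h) := ⟨hk1, hk2.le⟩
  have hut : u t = w k t := hueq k t hmem
  rcases eq_or_lt_of_le hk1 with heq | hlt
  · -- boundary case : t = k*h
    have hIccR : Icc ((k:ℝ)*h) ((k:ℝ)*h + h) ∈ 𝓝[≥] t :=
      Icc_mem_nhdsGE_of_mem ⟨hk1, hk2⟩
    have hR : HasDerivWithinAt u (f t (u t)) (Ici t) t := by
      have := ((hderivw k t hmem).mono_of_mem_nhdsWithin hIccR).congr_of_eventuallyEq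
        (Filter.eventuallyEq_of_mem hIccR (fun z hz => hueq k z hz)) hut
      rwa [← hut] at this
    have hL : HasDerivWithinAt u (f t (u t)) (Iic t) t := by
      by_cases ht0 : t = 0
      · subst ht0
        rw [hu0]
        have hv : HasDerivAt (fun s : ℝ => x + s • f 0 x) (f 0 x) 0 := by
          have h1 : HasDerivAt (fun s : ℝ => s • (f 0 x)) ((1:ℝ) • f 0 x) 0 :=
            (hasDerivAt_id 0).smul_const (f 0 x)
          simpa using h1
        apply hv.hasDerivWithinAt.congr
        · intro z hz
          rcases lt_or_eq_of_le (mem_Iic.1 hz) with hz' | hz'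
          · simp [hu, hz']
          · rw [hz', hu0]; simp
        · rw [hu0]; simp
      · have htpos : 0 < t := lt_of_le_of_ne ht (Ne.symm ht0)
        have hk0 : k ≠ 0 := by
          rintro rfl
          simp only [Nat.cast_zero, zero_mul] at heq
          linarith
        obtain ⟨m, hm⟩ := Nat.exists_eq_succ_of_ne_zero hk0
        have hteq : t = (m:ℝ)*h + h := by
          rw [← heq, hm]
          exact_mod_cast hcast m
        have hmemL : t ∈ Icc ((m:ℝ)*h) ((m:ℝ)*h + h) := ⟨by nlinarith, hteq.le⟩
        have hIccL : Icc ((m:ℝ)*h) ((m:ℝ)*h + h) ∈ 𝓝[≤] t :=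
          Icc_mem_nhdsLE_of_mem ⟨by nlinarith, hteq.le⟩
        have hutL : u t = w m t := hueq m t hmemL
        have := ((hderivw m t hmemL).mono_of_mem_nhdsWithin hIccL).congr_of_eventuallyEq
          (Filter.eventuallyEq_of_mem hIccL (fun z hz => hueq m z hz)) hutL
        rwa [← hutL] at this
    have huni := hL.union hR
    rw [Iic_union_Ici] at huni
    exact huni.hasDerivAt (by simp)
  · -- interior case
    have hnb : Icc ((k:ℝ)*h) ((k:ℝ)*h + h) ∈ 𝓝 t := Icc_mem_nhds hlt hk2
    have hw' : HasDerivAt (w k) (f t (w k t)) t :=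
      (hderivw k t hmem).hasDerivAt hnb
    have hev : u =ᶠ[𝓝 t] w k :=
      Filter.eventuallyEq_of_mem hnb (fun z hz => hueq k z hz)
    have := hw'.congr_of_eventuallyEq hev
    rwa [← hut] at this

end

end AuxProof

/-- Suppose `Ω = ℝⁿ` and `f` satisfies the dissipativity
condition (H) with constant `C > 0`.  Then for every `x ∈ ℝⁿ` the solution
with initial value `x` is defined for all `t ≥ 0`, eventually enters and
remains in `A = {z : |zᵢ| ≤ C for all i}`; in particular every forward orbit
is bounded. -/
theorem dissipative_implies_bounded_orbits
    {n : ℕ} [NeZero n] (hn : 3 ≤ n)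
    (T : ℝ) (f : ℝ → (Fin n → ℝ) → Fin n → ℝ)
    (hf : NegCyclicFeedback n T Set.univ f)
    (C : ℝ) (hC : 0 < C)
    (hH : ∀ t : ℝ, ∀ x : Fin n → ℝ, ∀ i : Fin n,
      C ≤ |x i| → |x (i - 1)| ≤ |x i| → |x (i + 1)| ≤ |x i| →
      f t x i * x i < 0) :
    ∀ x : Fin n → ℝ,
      (∃ u : ℝ → Fin n → ℝ, u 0 = x ∧
        ∀ t : ℝ, 0 ≤ t → HasDerivAt u (f t (u t)) t) ∧
      ∀ u : ℝ → Fin n → ℝ, u 0 = x →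
        (∀ t : ℝ, 0 ≤ t → HasDerivAt u (f t (u t)) t) →
        (∃ tstar : ℝ, 0 ≤ tstar ∧
          ∀ t : ℝ, tstar ≤ t → ∀ i : Fin n, |u t i| ≤ C) ∧
        ∃ M : ℝ, ∀ t : ℝ, 0 ≤ t → ‖u t‖ ≤ M := by
  obtain ⟨hT, -, -, hfC1, hper, -⟩ := hf
  have hF : ContDiff ℝ 1 (fun p : ℝ × (Fin n → ℝ) => f p.1 p.2) := by
    rw [← contDiffOn_univ, ← Set.univ_prod_univ]
    exact hfC1
  intro x
  refine ⟨global_exists T hT f hF hper C hC hH x, ?_⟩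
  intro u hu0 hu
  set M : ℝ := max ‖x‖ C with hM
  have hMC : C ≤ M := le_max_right _ _
  have hM0 : (0:ℝ) ≤ M := le_trans hC.le hMC
  have hcontOn : ∀ a b : ℝ, 0 ≤ a → ContinuousOn u (Icc a b) := fun a b ha s hs =>
    (hu s (le_trans ha hs.1)).continuousAt.continuousWithinAt
  have hderivOn : ∀ a b : ℝ, 0 ≤ a → ∀ s ∈ Ico a b,
      HasDerivWithinAt u (f s (u s)) (Ici s) s :=
    fun a b ha s hs => (hu s (le_trans ha hs.1)).hasDerivWithinAt
  have hfacts : ∀ s : ℝ, C^2 ≤ ‖u s‖^2 → ∀ i : Fin n, (u s i)^2 = ‖u s‖^2 →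
      C ≤ |u s i| ∧ |u s (i-1)| ≤ |u s i| ∧ |u s (i+1)| ≤ |u s i| := by
    intro s hsq i hi
    refine ⟨?_, ?_, ?_⟩
    · nlinarith [sq_abs (u s i), abs_nonneg (u s i), hC.le]
    · nlinarith [sq_coord_le (u s) (i-1), sq_abs (u s (i-1)), sq_abs (u s i),
        abs_nonneg (u s (i-1)), abs_nonneg (u s i)]
    · nlinarith [sq_coord_le (u s) (i+1), sq_abs (u s (i+1)), sq_abs (u s i),
        abs_nonneg (u s (i+1)), abs_nonneg (u s i)]
  have hlev : ∀ s : ℝ, C^2 ≤ ‖u s‖^2 → ∀ i : Fin n, (u s i)^2 = ‖u s‖^2 →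
      f s (u s) i * u s i < 0 := by
    intro s hsq i hi
    obtain ⟨h1, h2, h3⟩ := hfacts s hsq i hi
    exact hH s (u s) i h1 h2 h3
  have hbox : ∀ t : ℝ, 0 ≤ t → ‖u t‖^2 ≤ M^2 := by
    intro t ht
    refine core f u 0 t (hcontOn 0 t le_rfl) (hderivOn 0 t le_rfl)
      (fun _ => M^2) (fun _ => 0) (fun s => hasDerivAt_const s _)
      (by rw [hu0]; exact pow_le_pow_left₀ (norm_nonneg _) (le_max_left _ _) 2)
      ?_ t ⟨ht, le_rfl⟩
    intro s hs heq i hi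
    have heq' : ‖u s‖^2 = M^2 := heq
    show 2 * (f s (u s) i * u s i) < (0:ℝ)
    have := hlev s (by rw [heq']; exact pow_le_pow_left₀ hC.le hMC 2) i hi
    linarith
  have hMbound : ∀ t : ℝ, 0 ≤ t → ‖u t‖ ≤ M := by
    intro t ht
    nlinarith [hbox t ht, norm_nonneg (u t)]
  refine ⟨?_, ⟨M, hMbound⟩⟩
  -- compactness : uniform decay rate δ
  set Z : Fin n → Set (ℝ × (Fin n → ℝ)) := fun i =>
    {p | p.1 ∈ Icc 0 T ∧ ‖p.2‖ ≤ M ∧ C ≤ |p.2 i| ∧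
      |p.2 (i-1)| ≤ |p.2 i| ∧ |p.2 (i+1)| ≤ |p.2 i|} with hZ
  have hZc : ∀ i, IsCompact (Z i) := by
    intro i
    apply IsCompact.of_isClosed_subset
      (isCompact_Icc.prod (isCompact_closedBall (0 : Fin n → ℝ) M))
    · have h1 : IsClosed {p : ℝ × (Fin n → ℝ) | p.1 ∈ Icc 0 T} :=
        isClosed_Icc.preimage continuous_fst
      have h2 : IsClosed {p : ℝ × (Fin n → ℝ) | ‖p.2‖ ≤ M} :=
        isClosed_le continuous_snd.norm continuous_const
      have h3 : IsClosed {p : ℝ × (Fin n → ℝ) | C ≤ |p.2 i|} :=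
        isClosed_le continuous_const ((continuous_apply i).comp continuous_snd).abs
      have h4 : IsClosed {p : ℝ × (Fin n → ℝ) | |p.2 (i-1)| ≤ |p.2 i|} :=
        isClosed_le ((continuous_apply (i-1)).comp continuous_snd).abs
          ((continuous_apply i).comp continuous_snd).abs
      have h5 : IsClosed {p : ℝ × (Fin n → ℝ) | |p.2 (i+1)| ≤ |p.2 i|} :=
        isClosed_le ((continuous_apply (i+1)).comp continuous_snd).abs
          ((continuous_apply i).comp continuous_snd).abs
      exact h1.inter (h2.inter (h3.inter (h4.inter h5)))
    · rintro ⟨s, z⟩ ⟨hp1, hp2, -⟩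
      exact ⟨hp1, by simpa [Metric.mem_closedBall, dist_zero_right] using hp2⟩
  have hδi : ∀ i : Fin n, ∃ δ : ℝ, 0 < δ ∧ ∀ p ∈ Z i, f p.1 p.2 i * p.2 i ≤ -δ := by
    intro i
    rcases Set.eq_empty_or_nonempty (Z i) with hE | hNE
    · exact ⟨1, one_pos, fun p hp => by rw [hE] at hp; exact absurd hp (notMem_empty p)⟩
    · have hcψ : ContinuousOn (fun p : ℝ × (Fin n → ℝ) => f p.1 p.2 i * p.2 i) (Z i) :=
        (((continuous_apply i).comp hF.continuous).mul
          ((continuous_apply i).comp continuous_snd)).continuousOn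
      obtain ⟨p0, hp0, hmax⟩ := (hZc i).exists_isMaxOn hNE hcψ
      refine ⟨-(f p0.1 p0.2 i * p0.2 i), ?_, ?_⟩
      · have := hH p0.1 p0.2 i hp0.2.2.1 hp0.2.2.2.1 hp0.2.2.2.2
        linarith
      · intro p hp
        have := hmax hp
        simp only [neg_neg]
        exact this
  choose δf hδf0 hδf using hδi
  set δ : ℝ := Finset.univ.inf' Finset.univ_nonempty δf with hδ
  have hδ0 : 0 < δ := by
    rw [hδ, Finset.lt_inf'_iff]
    exact fun i _ => hδf0 i
  have hδle : ∀ i, δ ≤ δf i := fun i => Finset.inf'_le _ (Finset.mem_univ i)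
  have hperF : Function.Periodic (fun t : ℝ => f t) T := fun t => funext fun y => hper t y
  have hneg : ∀ s : ℝ, ∀ i : Fin n, ‖u s‖ ≤ M → C ≤ |u s i| →
      |u s (i-1)| ≤ |u s i| → |u s (i+1)| ≤ |u s i| → f s (u s) i * u s i ≤ -δ := by
    intro s i h1 h2 h3 h4
    obtain ⟨s', hs', heq⟩ := hperF.exists_mem_Ico₀ hT s
    have heq' : f s = f s' := heq
    rw [heq']
    have := hδf i (s', u s) ⟨Ico_subset_Icc_self hs', h1, h2, h3, h4⟩
    have := hδle i
    linarith [hδf i (s', u s) ⟨Ico_subset_Icc_self hs', h1, h2, h3, h4⟩]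
  -- eventual absorption
  have hfinal : ∀ a : ℝ, 0 ≤ a → ‖u a‖^2 ≤ C^2 → ∀ t, a ≤ t → ∀ i : Fin n, |u t i| ≤ C := by
    intro a ha hIa t hat i
    have hsq : ‖u t‖^2 ≤ C^2 := by
      refine core f u a t (hcontOn a t ha) (hderivOn a t ha)
        (fun _ => C^2) (fun _ => 0) (fun s => hasDerivAt_const s _) hIa ?_ t ⟨hat, le_rfl⟩
      intro s hs heq j hj
      have heq' : ‖u s‖^2 = C^2 := heq
      show 2 * (f s (u s) j * u s j) < (0:ℝ)
      have := hlev s (le_of_eq heq'.symm) j hj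
      linarith
    nlinarith [sq_coord_le (u t) i, sq_abs (u t i), abs_nonneg (u t i)]
  by_cases hcase : ‖x‖^2 ≤ C^2
  · exact ⟨0, le_rfl, hfinal 0 le_rfl (by rw [hu0]; exact hcase)⟩
  · push_neg at hcase
    set ts : ℝ := (‖x‖^2 - C^2)/δ with hts
    have hts0 : 0 < ts := by
      apply div_pos _ hδ0
      linarith
    have hstage1 : ‖u ts‖^2 ≤ C^2 := by
      have hBd : ∀ s : ℝ, HasDerivAt (fun s : ℝ => ‖x‖^2 - δ * s) (-δ) s := by
        intro s
        have h1 : HasDerivAt (fun s : ℝ => δ * s) (δ * 1) s := (hasDerivAt_id s).const_mul δ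
        exact ((hasDerivAt_const s (‖x‖^2)).sub h1).congr_deriv (by ring)
      have := core f u 0 ts (hcontOn 0 ts le_rfl) (hderivOn 0 ts le_rfl)
        (fun s => ‖x‖^2 - δ * s) (fun _ => -δ) hBd
        (by rw [hu0]; simp) ?_ ts ⟨hts0.le, le_rfl⟩
      · have hBts : ‖x‖^2 - δ * ts = C^2 := by
          rw [hts]
          field_simp
          ring
        have h2 : ‖u ts‖^2 ≤ ‖x‖^2 - δ * ts := this
        linarith
      intro s hs heq i hi
      have heq' : ‖u s‖^2 = ‖x‖^2 - δ * s := heq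
      show 2 * (f s (u s) i * u s i) < -δ
      have hgt : C^2 < ‖u s‖^2 := by
        rw [heq']
        have : s < ts := hs.2
        rw [hts] at this
        have := (lt_div_iff₀ hδ0).1 this
        linarith
      have h1 : ‖u s‖ ≤ M := hMbound s hs.1
      obtain ⟨h2, h3, h4⟩ := hfacts s hgt.le i hi
      have := hneg s i h1 h2 h3 h4
      linarith
    exact ⟨ts, hts0.le, hfinal ts hts0.le hstage1⟩
end
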